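/- For all integers a, b with 3 ≤ b and 2b/3 ≤ a < b, there exists a graph G of order b+2 with mp(G) = a and gp(G) = b. -/

import Mathlib

open SimpleGraph

/-- A walk is an *induced (monophonic) path* if it is a path and vertices on the
walk are adjacent in `G` exactly when they are consecutive on the walk. -/
def IsInducedPathW {V : Type*} (G : SimpleGraph V) {u v : V} (p : G.Walk u v) : Prop :=
  p.IsPath ∧ ∀ a b : V, a ∈ p.support → b ∈ p.support → (G.Adj a b ↔ p.toSubgraph.Adj a b)

/-- A walk is a *geodesic* if it is a shortest path between its endpoints. -/
def IsGeodesicW {V : Type*} (G : SimpleGraph V) {u v : V} (p : G.Walk u v) : Prop :=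
  p.IsPath ∧ p.length = G.dist u v

/-- A set of vertices is in *monophonic position* if no induced path of `G`
contains more than two of its vertices. -/
def IsMpSet {V : Type*} (G : SimpleGraph V) (S : Set V) : Prop :=
  ∀ ⦃u v : V⦄ (p : G.Walk u v), IsInducedPathW G p → (S ∩ {x | x ∈ p.support}).ncard ≤ 2

/-- A set of vertices is in *general position* if no geodesic of `G` contains
more than two of its vertices. -/
def IsGpSet {V : Type*} (G : SimpleGraph V) (S : Set V) : Prop :=
  ∀ ⦃u v : V⦄ (p : G.Walk u v), IsGeodesicW G p → (S ∩ {x | x ∈ p.support}).ncard ≤ 2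

/-- The monophonic position number `mp(G)`. -/
noncomputable def mpNum {V : Type*} (G : SimpleGraph V) : ℕ :=
  sSup {n | ∃ S : Set V, IsMpSet G S ∧ S.ncard = n}

/-- The general position number `gp(G)`. -/
noncomputable def gpNum {V : Type*} (G : SimpleGraph V) : ℕ :=
  sSup {n | ∃ S : Set V, IsGpSet G S ∧ S.ncard = n}

/-! ### Arithmetic adjacency relation for the Mas graph -/

/-- Arithmetic adjacency for the Mas graph on `{0, ..., N-1}`: vertex `0` is `x`,
vertex `1` is `y`, `[2, 2+c)` is `R'`, `[2+c, 2+2c)` is `R''`, `[2+2c, N)` is `S`. -/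
def masRel (c m n : ℕ) : Prop :=
  m ≠ n ∧
    ((2 ≤ m ∧ m < 2+2*c ∧ 2 ≤ n ∧ n < 2+2*c) ∨
     (m = 0 ∧ (2+2*c ≤ n ∨ (2 ≤ n ∧ n < 2+c))) ∨
     (n = 0 ∧ (2+2*c ≤ m ∨ (2 ≤ m ∧ m < 2+c))) ∨
     (m = 1 ∧ (2+2*c ≤ n ∨ (2+c ≤ n ∧ n < 2+2*c))) ∨
     (n = 1 ∧ (2+2*c ≤ m ∨ (2+c ≤ m ∧ m < 2+2*c))))

set_option maxHeartbeats 1000000 in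
/-- Classification of non-adjacent pairs. -/
lemma masRel_not {c m n : ℕ} (h : ¬ masRel c m n) :
    m = n ∨ (m = 0 ∧ n = 1) ∨ (n = 0 ∧ m = 1) ∨
    (m = 0 ∧ 2+c ≤ n ∧ n < 2+2*c) ∨ (n = 0 ∧ 2+c ≤ m ∧ m < 2+2*c) ∨
    (m = 1 ∧ 2 ≤ n ∧ n < 2+c) ∨ (n = 1 ∧ 2 ≤ m ∧ m < 2+c) ∨
    (2+2*c ≤ m ∧ 2+2*c ≤ n) ∨
    (2+2*c ≤ m ∧ 2 ≤ n ∧ n < 2+2*c) ∨ (2+2*c ≤ n ∧ 2 ≤ m ∧ m < 2+2*c) := by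
  by_cases hmn : m = n
  · exact Or.inl hmn
  have hm : m = 0 ∨ m = 1 ∨ (2 ≤ m ∧ m < 2+c) ∨ (2+c ≤ m ∧ m < 2+2*c) ∨ 2+2*c ≤ m := by omega
  have hn : n = 0 ∨ n = 1 ∨ (2 ≤ n ∧ n < 2+c) ∨ (2+c ≤ n ∧ n < 2+2*c) ∨ 2+2*c ≤ n := by omega
  rcases hm with hm|hm|hm|hm|hm <;> rcases hn with hn|hn|hn|hn|hn <;>
    first
      | (exact absurd (by unfold masRel; omega) h)
      | (clear h; omega)

set_option maxHeartbeats 4000000 in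
/-- There is no induced path on five vertices in the Mas graph. -/
lemma p5_arith {c a0 a1 a2 a3 a4 : ℕ}
    (h1 : masRel c a0 a1) (h2 : masRel c a1 a2) (h3 : masRel c a2 a3) (h4 : masRel c a3 a4)
    (n02 : ¬ masRel c a0 a2) (n03 : ¬ masRel c a0 a3) (n04 : ¬ masRel c a0 a4)
    (n13 : ¬ masRel c a1 a3) (n14 : ¬ masRel c a1 a4) (n24 : ¬ masRel c a2 a4)
    (d02 : a0 ≠ a2) (d03 : a0 ≠ a3) (d04 : a0 ≠ a4) (d13 : a1 ≠ a3) (d14 : a1 ≠ a4)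
    (d24 : a2 ≠ a4) : False := by
  have H02 := masRel_not n02
  have H03 := masRel_not n03
  have H04 := masRel_not n04
  have H13 := masRel_not n13
  have H14 := masRel_not n14
  have H24 := masRel_not n24
  clear n02 n03 n04 n13 n14 n24
  unfold masRel at h1 h2 h3 h4
  rcases H02 with H02|H02|H02|H02|H02|H02|H02|H02|H02|H02 <;>
    rcases H24 with H24|H24|H24|H24|H24|H24|H24|H24|H24|H24 <;>
      omega

set_option maxHeartbeats 1000000 in
lemma mp2_arith {c a0 a1 a2 : ℕ}
    (h1 : masRel c a0 a1) (h2 : masRel c a1 a2) (n02 : ¬ masRel c a0 a2) (d02 : a0 ≠ a2) :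
    ¬(2+c ≤ a0) ∨ ¬(2+c ≤ a1) ∨ ¬(2+c ≤ a2) := by
  have H := masRel_not n02
  unfold masRel at h1 h2
  rcases H with H|H|H|H|H|H|H|H|H|H <;> omega

set_option maxHeartbeats 4000000 in
lemma mp3_arith {c a0 a1 a2 a3 : ℕ}
    (h1 : masRel c a0 a1) (h2 : masRel c a1 a2) (h3 : masRel c a2 a3)
    (n02 : ¬ masRel c a0 a2) (n03 : ¬ masRel c a0 a3) (n13 : ¬ masRel c a1 a3)
    (d02 : a0 ≠ a2) (d03 : a0 ≠ a3) (d13 : a1 ≠ a3) :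
    (¬(2+c ≤ a0) ∧ ¬(2+c ≤ a1)) ∨ (¬(2+c ≤ a0) ∧ ¬(2+c ≤ a2)) ∨
    (¬(2+c ≤ a0) ∧ ¬(2+c ≤ a3)) ∨ (¬(2+c ≤ a1) ∧ ¬(2+c ≤ a2)) ∨
    (¬(2+c ≤ a1) ∧ ¬(2+c ≤ a3)) ∨ (¬(2+c ≤ a2) ∧ ¬(2+c ≤ a3)) := by
  have H02 := masRel_not n02
  have H03 := masRel_not n03
  have H13 := masRel_not n13
  unfold masRel at h1 h2 h3
  rcases H02 with H02|H02|H02|H02|H02|H02|H02|H02|H02|H02 <;>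
    rcases H13 with H13|H13|H13|H13|H13|H13|H13|H13|H13|H13 <;>
      rcases H03 with H03|H03|H03|H03|H03|H03|H03|H03|H03|H03 <;>
        omega

set_option maxHeartbeats 1000000 in
lemma gp2_arith {c a0 a1 a2 : ℕ}
    (h1 : masRel c a0 a1) (h2 : masRel c a1 a2) (n02 : ¬ masRel c a0 a2) (d02 : a0 ≠ a2) :
    ¬(2 ≤ a0) ∨ ¬(2 ≤ a1) ∨ ¬(2 ≤ a2) := by
  have H := masRel_not n02
  unfold masRel at h1 h2
  rcases H with H|H|H|H|H|H|H|H|H|H <;> omega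

/-! ### Generic walk lemmas -/

section Generic

variable {V : Type*} {G : SimpleGraph V}

lemma induced_tail {u v w : V} (h : G.Adj u v) (q : G.Walk v w)
    (hp : IsInducedPathW G (SimpleGraph.Walk.cons h q)) : IsInducedPathW G q := by
  obtain ⟨hpath, hiff⟩ := hp
  refine ⟨hpath.of_cons, fun a b ha hb => ?_⟩
  have ha' : a ∈ (Walk.cons h q).support := by simp [Walk.support_cons, ha]
  have hb' : b ∈ (Walk.cons h q).support := by simp [Walk.support_cons, hb]
  rw [hiff a b ha' hb']
  have hu : u ∉ q.support := by
    have := hpath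
    rw [Walk.isPath_def, Walk.support_cons] at this
    exact (List.nodup_cons.mp this).1
  constructor
  · intro hadj
    simp only [Walk.toSubgraph, Subgraph.sup_adj, subgraphOfAdj_adj] at hadj
    rcases hadj with heq | hadj
    · rw [Sym2.eq_iff] at heq
      rcases heq with ⟨rfl, rfl⟩ | ⟨rfl, rfl⟩
      · exact absurd ha hu
      · exact absurd hb hu
    · exact hadj
  · intro hadj
    simp only [Walk.toSubgraph, Subgraph.sup_adj]
    exact Or.inr hadj

lemma head_nonadj {u v w : V} (h : G.Adj u v) (q : G.Walk v w)
    (hp : IsInducedPathW G (SimpleGraph.Walk.cons h q)) {z : V} (hz : z ∈ q.support)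
    (hzv : z ≠ v) : ¬ G.Adj u z := by
  obtain ⟨hpath, hiff⟩ := hp
  have hu : u ∉ q.support := by
    rw [Walk.isPath_def, Walk.support_cons] at hpath
    exact (List.nodup_cons.mp hpath).1
  intro hadj
  have := (hiff u z (by simp) (by simp [hz])).mp hadj
  simp only [Walk.toSubgraph, Subgraph.sup_adj, subgraphOfAdj_adj] at this
  rcases this with heq | hadj'
  · rw [Sym2.eq_iff] at heq
    rcases heq with ⟨-, hv⟩ | ⟨hu2, -⟩
    · exact hzv hv.symm
    · exact (G.loopless.irrefl u) (hu2 ▸ hadj)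
  · have := hadj'.fst_mem
    rw [Walk.verts_toSubgraph] at this
    exact hu this

lemma path2_isPath {v0 v1 v2 : V} (h1 : G.Adj v0 v1) (h2 : G.Adj v1 v2) (d02 : v0 ≠ v2) :
    (Walk.cons h1 (Walk.cons h2 Walk.nil)).IsPath := by
  rw [Walk.cons_isPath_iff, Walk.cons_isPath_iff]
  refine ⟨⟨Walk.IsPath.nil, by simp [h2.ne]⟩, by simp [h1.ne, d02]⟩

lemma geo2 {v0 v1 v2 : V} (h1 : G.Adj v0 v1) (h2 : G.Adj v1 v2) (d02 : v0 ≠ v2)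
    (n02 : ¬ G.Adj v0 v2) : IsGeodesicW G (Walk.cons h1 (Walk.cons h2 Walk.nil)) := by
  refine ⟨path2_isPath h1 h2 d02, ?_⟩
  have hle : G.dist v0 v2 ≤ 2 := by
    have := SimpleGraph.dist_le (Walk.cons h1 (Walk.cons h2 Walk.nil))
    simpa using this
  have hpos : 0 < G.dist v0 v2 :=
    Reachable.pos_dist_of_ne ⟨Walk.cons h1 (Walk.cons h2 Walk.nil)⟩ d02
  have hne1 : G.dist v0 v2 ≠ 1 := fun h => n02 (SimpleGraph.dist_eq_one_iff_adj.mp h)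
  simp only [Walk.length_cons, Walk.length_nil]
  omega

lemma induced3 {v0 v1 v2 : V} (h1 : G.Adj v0 v1) (h2 : G.Adj v1 v2) (d02 : v0 ≠ v2)
    (n02 : ¬ G.Adj v0 v2) : IsInducedPathW G (Walk.cons h1 (Walk.cons h2 Walk.nil)) := by
  refine ⟨path2_isPath h1 h2 d02, ?_⟩
  intro a b ha hb
  simp only [Walk.support_cons, Walk.support_nil, List.mem_cons, List.mem_singleton,
    List.not_mem_nil, or_false] at ha hb
  simp only [Walk.toSubgraph, Subgraph.sup_adj, subgraphOfAdj_adj, singletonSubgraph_adj,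
    Pi.bot_apply, Prop.bot_eq_false, or_false]
  constructor
  · intro hadj
    rcases ha with rfl|rfl|rfl <;> rcases hb with rfl|rfl|rfl <;>
      first
        | exact absurd hadj (G.loopless.irrefl _)
        | exact absurd hadj n02
        | exact absurd hadj (fun h => n02 h.symm)
        | (left; rw [Sym2.eq_iff]; tauto)
        | (right; rw [Sym2.eq_iff]; tauto)
  · intro hadj
    rcases hadj with h|h <;> rw [Sym2.eq_iff] at h <;>
      rcases h with ⟨rfl, rfl⟩|⟨rfl, rfl⟩ <;>
        first
          | exact h1 | exact h1.symm | exact h2 | exact h2.symm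

lemma path3_isPath {v0 v1 v2 v3 : V} (h1 : G.Adj v0 v1) (h2 : G.Adj v1 v2) (h3 : G.Adj v2 v3)
    (d02 : v0 ≠ v2) (d03 : v0 ≠ v3) (d13 : v1 ≠ v3) :
    (Walk.cons h1 (Walk.cons h2 (Walk.cons h3 Walk.nil))).IsPath := by
  rw [Walk.cons_isPath_iff, Walk.cons_isPath_iff, Walk.cons_isPath_iff]
  refine ⟨⟨⟨Walk.IsPath.nil, by simp [h3.ne]⟩, by simp [h2.ne, d13]⟩, by simp [h1.ne, d02, d03]⟩

lemma induced4 {v0 v1 v2 v3 : V} (h1 : G.Adj v0 v1) (h2 : G.Adj v1 v2) (h3 : G.Adj v2 v3)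
    (d02 : v0 ≠ v2) (d03 : v0 ≠ v3) (d13 : v1 ≠ v3)
    (n02 : ¬ G.Adj v0 v2) (n03 : ¬ G.Adj v0 v3) (n13 : ¬ G.Adj v1 v3) :
    IsInducedPathW G (Walk.cons h1 (Walk.cons h2 (Walk.cons h3 Walk.nil))) := by
  refine ⟨path3_isPath h1 h2 h3 d02 d03 d13, ?_⟩
  intro a b ha hb
  simp only [Walk.support_cons, Walk.support_nil, List.mem_cons, List.mem_singleton,
    List.not_mem_nil, or_false] at ha hb
  simp only [Walk.toSubgraph, Subgraph.sup_adj, subgraphOfAdj_adj, singletonSubgraph_adj,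
    Pi.bot_apply, Prop.bot_eq_false, or_false]
  constructor
  · intro hadj
    rcases ha with rfl|rfl|rfl|rfl <;> rcases hb with rfl|rfl|rfl|rfl <;>
      first
        | exact absurd hadj (G.loopless.irrefl _)
        | exact absurd hadj n02
        | exact absurd hadj n03
        | exact absurd hadj n13
        | exact absurd hadj (fun h => n02 h.symm)
        | exact absurd hadj (fun h => n03 h.symm)
        | exact absurd hadj (fun h => n13 h.symm)
        | (left; rw [Sym2.eq_iff]; tauto)
        | (right; left; rw [Sym2.eq_iff]; tauto)
        | (right; right; rw [Sym2.eq_iff]; tauto)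
  · intro hadj
    rcases hadj with h|h|h <;> rw [Sym2.eq_iff] at h <;>
      rcases h with ⟨rfl, rfl⟩|⟨rfl, rfl⟩ <;>
        first
          | exact h1 | exact h1.symm | exact h2 | exact h2.symm | exact h3 | exact h3.symm

end Generic

/-! ### Cardinality helpers -/

lemma ncard_le_two_of_subset_pair {α : Type*} {s : Set α} {u v : α} (h : s ⊆ {u, v}) :
    s.ncard ≤ 2 := by
  calc s.ncard ≤ ({u, v} : Set α).ncard :=
        Set.ncard_le_ncard h ((Set.finite_singleton v).insert u)
    _ ≤ ({v} : Set α).ncard + 1 := Set.ncard_insert_le _ _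
    _ ≤ 2 := by simp

lemma three_le_ncard {α : Type*} [Finite α] {s : Set α} {u v w : α}
    (hu : u ∈ s) (hv : v ∈ s) (hw : w ∈ s) (huv : u ≠ v) (huw : u ≠ w) (hvw : v ≠ w) :
    3 ≤ s.ncard := by
  have hsub : ({u, v, w} : Set α) ⊆ s := by
    intro z hz; rcases hz with rfl|rfl|rfl <;> assumption
  have hc : ({u, v, w} : Set α).ncard = 3 := by
    rw [Set.ncard_insert_of_notMem (by simp [huv, huw]),
      Set.ncard_insert_of_notMem (by simp [hvw]), Set.ncard_singleton]
  rw [← hc]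
  exact Set.ncard_le_ncard hsub (Set.toFinite s)

lemma ncard_val_Ico {N l r : ℕ} (hr : r ≤ N) :
    {i : Fin N | l ≤ i.val ∧ i.val < r}.ncard = r - l := by
  classical
  have he : {i : Fin N | l ≤ i.val ∧ i.val < r} =
      ↑(Finset.univ.filter (fun i : Fin N => l ≤ i.val ∧ i.val < r)) := by
    ext i; simp
  rw [he, Set.ncard_coe_finset]
  rw [show r - l = (Finset.range (r - l)).card from (Finset.card_range _).symm]
  apply Finset.card_bij' (fun i _ => i.val - l) (fun k hk => (⟨l + k, by
    simp only [Finset.mem_range] at hk; omega⟩ : Fin N))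
  all_goals intro z hz
  all_goals simp only [Finset.mem_filter, Finset.mem_range, Finset.mem_univ, true_and] at hz ⊢
  any_goals apply Fin.ext
  all_goals first
    | omega
    | (simp; omega)

/-! ### The Mas graph -/

def mas (c N : ℕ) : SimpleGraph (Fin N) where
  Adj i j := masRel c i.val j.val
  symm := by
    constructor; intro i j hij; beta_reduce at *
    unfold masRel at *
    omega
  loopless := by
    constructor; intro i hij; beta_reduce at hij
    unfold masRel at hij
    omega

lemma mas_adj {c N : ℕ} {i j : Fin N} : (mas c N).Adj i j ↔ masRel c i.val j.val := Iff.rfl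

lemma adj_of_val {c N : ℕ} {i j : Fin N} (h : masRel c i.val j.val) : (mas c N).Adj i j := h

lemma ne_of_val_ne {N : ℕ} {i j : Fin N} (h : i.val ≠ j.val) : i ≠ j :=
  fun e => h (congrArg Fin.val e)

set_option maxHeartbeats 1000000 in
/-- Every induced path in the Mas graph has length at most 3. -/
lemma mas_no_p5 {c N : ℕ} {u v : Fin N} (p : (mas c N).Walk u v)
    (hp : IsInducedPathW (mas c N) p) : p.length ≤ 3 := by
  by_contra hlen
  push_neg at hlen
  cases p with
  | nil => simp at hlen
  | cons h1 p1 =>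
  cases p1 with
  | nil => simp at hlen
  | cons h2 p2 =>
  cases p2 with
  | nil => simp at hlen
  | cons h3 p3 =>
  cases p3 with
  | nil => simp at hlen
  | cons h4 p4 =>
  rename_i v1 v2 v3 v4
  have hv4 : v4 ∈ p4.support := Walk.start_mem_support _
  have hP := hp.1
  rw [Walk.cons_isPath_iff] at hP
  obtain ⟨hP1, hu0⟩ := hP
  rw [Walk.cons_isPath_iff] at hP1
  obtain ⟨hP2, hu1⟩ := hP1
  rw [Walk.cons_isPath_iff] at hP2
  obtain ⟨hP3, hu2⟩ := hP2
  rw [Walk.cons_isPath_iff] at hP3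
  obtain ⟨hP4, hu3⟩ := hP3
  have hp1 : IsInducedPathW (mas c N) (Walk.cons h2 (Walk.cons h3 (Walk.cons h4 p4))) :=
    induced_tail _ _ hp
  have hp2 : IsInducedPathW (mas c N) (Walk.cons h3 (Walk.cons h4 p4)) :=
    induced_tail _ _ hp1
  have mem2 : v2 ∈ (Walk.cons h2 (Walk.cons h3 (Walk.cons h4 p4))).support := by simp
  have mem3 : v3 ∈ (Walk.cons h2 (Walk.cons h3 (Walk.cons h4 p4))).support := by simp
  have mem4 : v4 ∈ (Walk.cons h2 (Walk.cons h3 (Walk.cons h4 p4))).support := by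
    simp [hv4]
  have mem3' : v3 ∈ (Walk.cons h3 (Walk.cons h4 p4)).support := by simp
  have mem4' : v4 ∈ (Walk.cons h3 (Walk.cons h4 p4)).support := by simp [hv4]
  have mem4'' : v4 ∈ (Walk.cons h4 p4).support := by simp [hv4]
  have ne21 : v2 ≠ v1 := by intro h; apply hu1; rw [← h]; simp
  have ne31 : v3 ≠ v1 := by intro h; apply hu1; rw [← h]; simp
  have ne41 : v4 ≠ v1 := by intro h; apply hu1; rw [← h]; simp [hv4]
  have ne32 : v3 ≠ v2 := by intro h; apply hu2; rw [← h]; simp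
  have ne42 : v4 ≠ v2 := by intro h; apply hu2; rw [← h]; simp [hv4]
  have ne43 : v4 ≠ v3 := by intro h; apply hu3; rw [← h]; exact hv4
  have n02 : ¬ (mas c N).Adj u v2 := head_nonadj h1 _ hp mem2 ne21
  have n03 : ¬ (mas c N).Adj u v3 := head_nonadj h1 _ hp mem3 ne31
  have n04 : ¬ (mas c N).Adj u v4 := head_nonadj h1 _ hp mem4 ne41
  have n13 : ¬ (mas c N).Adj v1 v3 := head_nonadj h2 _ hp1 mem3' ne32
  have n14 : ¬ (mas c N).Adj v1 v4 := head_nonadj h2 _ hp1 mem4' ne42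
  have n24 : ¬ (mas c N).Adj v2 v4 := head_nonadj h3 _ hp2 mem4'' ne43
  have d02 : u.val ≠ v2.val := Fin.val_ne_iff.mpr (by intro h; exact hu0 (h ▸ mem2))
  have d03 : u.val ≠ v3.val := Fin.val_ne_iff.mpr (by intro h; exact hu0 (h ▸ mem3))
  have d04 : u.val ≠ v4.val := Fin.val_ne_iff.mpr (by intro h; exact hu0 (h ▸ mem4))
  have d13 : v1.val ≠ v3.val := Fin.val_ne_iff.mpr ne31.symm
  have d14 : v1.val ≠ v4.val := Fin.val_ne_iff.mpr ne41.symm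
  have d24 : v2.val ≠ v4.val := Fin.val_ne_iff.mpr ne42.symm
  exact p5_arith (mas_adj.mp h1) (mas_adj.mp h2) (mas_adj.mp h3) (mas_adj.mp h4)
    (fun h => n02 (mas_adj.mpr h)) (fun h => n03 (mas_adj.mpr h))
    (fun h => n04 (mas_adj.mpr h)) (fun h => n13 (mas_adj.mpr h))
    (fun h => n14 (mas_adj.mpr h)) (fun h => n24 (mas_adj.mpr h))
    d02 d03 d04 d13 d14 d24

lemma mas_dist_le_two_aux {c N : ℕ} {u v : Fin N} (w : ℕ) (hw : w < N)
    (h1 : masRel c u.val w) (h2 : masRel c w v.val) : (mas c N).dist u v ≤ 2 := by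
  have h1' : (mas c N).Adj u ⟨w, hw⟩ := h1
  have h2' : (mas c N).Adj (⟨w, hw⟩ : Fin N) v := h2
  have := SimpleGraph.dist_le (Walk.cons h1' (Walk.cons h2' Walk.nil))
  simpa using this

set_option maxHeartbeats 1000000 in
/-- The Mas graph has diameter at most two. -/
lemma mas_dist_le_two {c N : ℕ} (hc : 1 ≤ c) (hN : 2+2*c < N) (u v : Fin N) :
    (mas c N).dist u v ≤ 2 := by
  by_cases he : u = v
  · subst he; simp [SimpleGraph.dist_self]
  by_cases ha : (mas c N).Adj u v
  · have := SimpleGraph.dist_le (Walk.cons ha Walk.nil)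
    simp only [Walk.length_cons, Walk.length_nil] at this
    omega
  have hne : u.val ≠ v.val := Fin.val_ne_iff.mpr he
  have hu := u.isLt
  have hv := v.isLt
  have H := masRel_not (fun h => ha (mas_adj.mpr h))
  rcases H with H|H|H|H|H|H|H|H|H|H
  · exact absurd H hne
  · exact mas_dist_le_two_aux (2+2*c) (by omega) (by unfold masRel; omega)
      (by unfold masRel; omega)
  · exact mas_dist_le_two_aux (2+2*c) (by omega) (by unfold masRel; omega)
      (by unfold masRel; omega)
  · exact mas_dist_le_two_aux 2 (by omega) (by unfold masRel; omega)
      (by unfold masRel; omega)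
  · exact mas_dist_le_two_aux 2 (by omega) (by unfold masRel; omega)
      (by unfold masRel; omega)
  · exact mas_dist_le_two_aux (2+c) (by omega) (by unfold masRel; omega)
      (by unfold masRel; omega)
  · exact mas_dist_le_two_aux (2+c) (by omega) (by unfold masRel; omega)
      (by unfold masRel; omega)
  · exact mas_dist_le_two_aux 0 (by omega) (by unfold masRel; omega)
      (by unfold masRel; omega)
  · -- u in S, v in R
    by_cases hvb : v.val < 2+c
    · exact mas_dist_le_two_aux 0 (by omega) (by unfold masRel; omega)
        (by unfold masRel; omega)
    · exact mas_dist_le_two_aux 1 (by omega) (by unfold masRel; omega)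
        (by unfold masRel; omega)
  · by_cases hub : u.val < 2+c
    · exact mas_dist_le_two_aux 0 (by omega) (by unfold masRel; omega)
        (by unfold masRel; omega)
    · exact mas_dist_le_two_aux 1 (by omega) (by unfold masRel; omega)
        (by unfold masRel; omega)

/-! ### Lower bound sets -/

lemma ncard_val_le {N r : ℕ} (hr : r ≤ N) : {i : Fin N | r ≤ i.val}.ncard = N - r := by
  have he : {i : Fin N | r ≤ i.val} = {i : Fin N | r ≤ i.val ∧ i.val < N} := by
    ext i; simp [i.isLt]
  rw [he, ncard_val_Ico le_rfl]

set_option maxHeartbeats 1000000 in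
/-- `R'' ∪ S` is in monophonic position. -/
lemma mas_isMpSet {c N : ℕ} : IsMpSet (mas c N) {i : Fin N | 2+c ≤ i.val} := by
  intro u v p hp
  have hlen := mas_no_p5 p hp
  cases p with
  | nil =>
    apply ncard_le_two_of_subset_pair (u := u) (v := u)
    rintro z ⟨-, hzs⟩
    simp only [Walk.support_nil, List.mem_singleton, Set.mem_setOf_eq] at hzs
    simp [hzs]
  | cons h1 p1 =>
  rename_i v1
  cases p1 with
  | nil =>
    apply ncard_le_two_of_subset_pair (u := u) (v := v)
    rintro z ⟨-, hzs⟩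
    simp only [Walk.support_cons, Walk.support_nil, List.mem_cons, List.mem_singleton,
      List.not_mem_nil, or_false, Set.mem_setOf_eq] at hzs
    rcases hzs with rfl|rfl <;> simp
  | cons h2 p2 =>
  rename_i v2
  cases p2 with
  | nil =>
    -- support is [u, v1, v]
    have hP := hp.1
    rw [Walk.cons_isPath_iff, Walk.cons_isPath_iff] at hP
    obtain ⟨⟨-, h12⟩, h0⟩ := hP
    have mem2 : v ∈ (Walk.cons h2 Walk.nil).support := by simp
    have ne21 : v ≠ v1 := by intro h; apply h12; rw [← h]; simp
    have d02 : u ≠ v := by intro h; apply h0; rw [h]; exact mem2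
    have n02 : ¬ (mas c N).Adj u v := head_nonadj h1 _ hp mem2 ne21
    have D := mp2_arith (mas_adj.mp h1) (mas_adj.mp h2)
      (fun h => n02 (mas_adj.mpr h)) (Fin.val_ne_iff.mpr d02)
    rcases D with D|D|D
    · apply ncard_le_two_of_subset_pair (u := v1) (v := v)
      rintro z ⟨hzM, hzs⟩
      simp only [Set.mem_setOf_eq] at hzM hzs
      simp only [Walk.support_cons, Walk.support_nil, List.mem_cons, List.mem_singleton,
        List.not_mem_nil, or_false] at hzs
      rcases hzs with rfl|rfl|rfl
      · exact absurd hzM D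
      · simp
      · simp
    · apply ncard_le_two_of_subset_pair (u := u) (v := v)
      rintro z ⟨hzM, hzs⟩
      simp only [Set.mem_setOf_eq] at hzM hzs
      simp only [Walk.support_cons, Walk.support_nil, List.mem_cons, List.mem_singleton,
        List.not_mem_nil, or_false] at hzs
      rcases hzs with rfl|rfl|rfl
      · simp
      · exact absurd hzM D
      · simp
    · apply ncard_le_two_of_subset_pair (u := u) (v := v1)
      rintro z ⟨hzM, hzs⟩
      simp only [Set.mem_setOf_eq] at hzM hzs
      simp only [Walk.support_cons, Walk.support_nil, List.mem_cons, List.mem_singleton,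
        List.not_mem_nil, or_false] at hzs
      rcases hzs with rfl|rfl|rfl
      · simp
      · simp
      · exact absurd hzM D
  | cons h3 p3 =>
  cases p3 with
  | cons h4 p4 =>
    exfalso
    simp only [Walk.length_cons] at hlen
    omega
  | nil =>
    -- support is [u, v1, v2, v]
    have hP := hp.1
    rw [Walk.cons_isPath_iff, Walk.cons_isPath_iff, Walk.cons_isPath_iff] at hP
    obtain ⟨⟨⟨-, h23⟩, h12⟩, h0⟩ := hP
    have hp1 : IsInducedPathW (mas c N) (Walk.cons h2 (Walk.cons h3 Walk.nil)) :=
      induced_tail _ _ hp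
    have mem2 : v2 ∈ (Walk.cons h2 (Walk.cons h3 Walk.nil)).support := by simp
    have mem3 : v ∈ (Walk.cons h2 (Walk.cons h3 Walk.nil)).support := by simp
    have mem3' : v ∈ (Walk.cons h3 Walk.nil).support := by simp
    have ne21 : v2 ≠ v1 := by intro h; apply h12; rw [← h]; simp
    have ne31 : v ≠ v1 := by intro h; apply h12; rw [← h]; simp
    have ne32 : v ≠ v2 := by intro h; apply h23; rw [← h]; simp
    have d02 : u ≠ v2 := by intro h; apply h0; rw [h]; exact mem2
    have d03 : u ≠ v := by intro h; apply h0; rw [h]; exact mem3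
    have n02 : ¬ (mas c N).Adj u v2 := head_nonadj h1 _ hp mem2 ne21
    have n03 : ¬ (mas c N).Adj u v := head_nonadj h1 _ hp mem3 ne31
    have n13 : ¬ (mas c N).Adj v1 v := head_nonadj h2 _ hp1 mem3' ne32
    have D := mp3_arith (mas_adj.mp h1) (mas_adj.mp h2) (mas_adj.mp h3)
      (fun h => n02 (mas_adj.mpr h)) (fun h => n03 (mas_adj.mpr h))
      (fun h => n13 (mas_adj.mpr h)) (Fin.val_ne_iff.mpr d02) (Fin.val_ne_iff.mpr d03)
      (Fin.val_ne_iff.mpr ne31.symm)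
    rcases D with ⟨D1, D2⟩|⟨D1, D2⟩|⟨D1, D2⟩|⟨D1, D2⟩|⟨D1, D2⟩|⟨D1, D2⟩
    · apply ncard_le_two_of_subset_pair (u := v2) (v := v)
      rintro z ⟨hzM, hzs⟩
      simp only [Set.mem_setOf_eq] at hzM hzs
      simp only [Walk.support_cons, Walk.support_nil, List.mem_cons, List.mem_singleton,
        List.not_mem_nil, or_false] at hzs
      rcases hzs with rfl|rfl|rfl|rfl
      · exact absurd hzM D1
      · exact absurd hzM D2
      · simp
      · simp
    · apply ncard_le_two_of_subset_pair (u := v1) (v := v)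
      rintro z ⟨hzM, hzs⟩
      simp only [Set.mem_setOf_eq] at hzM hzs
      simp only [Walk.support_cons, Walk.support_nil, List.mem_cons, List.mem_singleton,
        List.not_mem_nil, or_false] at hzs
      rcases hzs with rfl|rfl|rfl|rfl
      · exact absurd hzM D1
      · simp
      · exact absurd hzM D2
      · simp
    · apply ncard_le_two_of_subset_pair (u := v1) (v := v2)
      rintro z ⟨hzM, hzs⟩
      simp only [Set.mem_setOf_eq] at hzM hzs
      simp only [Walk.support_cons, Walk.support_nil, List.mem_cons, List.mem_singleton,
        List.not_mem_nil, or_false] at hzs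
      rcases hzs with rfl|rfl|rfl|rfl
      · exact absurd hzM D1
      · simp
      · simp
      · exact absurd hzM D2
    · apply ncard_le_two_of_subset_pair (u := u) (v := v)
      rintro z ⟨hzM, hzs⟩
      simp only [Set.mem_setOf_eq] at hzM hzs
      simp only [Walk.support_cons, Walk.support_nil, List.mem_cons, List.mem_singleton,
        List.not_mem_nil, or_false] at hzs
      rcases hzs with rfl|rfl|rfl|rfl
      · simp
      · exact absurd hzM D1
      · exact absurd hzM D2
      · simp
    · apply ncard_le_two_of_subset_pair (u := u) (v := v2)
      rintro z ⟨hzM, hzs⟩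
      simp only [Set.mem_setOf_eq] at hzM hzs
      simp only [Walk.support_cons, Walk.support_nil, List.mem_cons, List.mem_singleton,
        List.not_mem_nil, or_false] at hzs
      rcases hzs with rfl|rfl|rfl|rfl
      · simp
      · exact absurd hzM D1
      · simp
      · exact absurd hzM D2
    · apply ncard_le_two_of_subset_pair (u := u) (v := v1)
      rintro z ⟨hzM, hzs⟩
      simp only [Set.mem_setOf_eq] at hzM hzs
      simp only [Walk.support_cons, Walk.support_nil, List.mem_cons, List.mem_singleton,
        List.not_mem_nil, or_false] at hzs
      rcases hzs with rfl|rfl|rfl|rfl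
      · simp
      · simp
      · exact absurd hzM D1
      · exact absurd hzM D2

set_option maxHeartbeats 1000000 in
/-- `R ∪ S` is in general position. -/
lemma mas_isGpSet {c N : ℕ} (hc : 1 ≤ c) (hN : 2+2*c < N) :
    IsGpSet (mas c N) {i : Fin N | 2 ≤ i.val} := by
  intro u v p hp
  have hlen : p.length ≤ 2 := by
    rw [hp.2]; exact mas_dist_le_two hc hN u v
  cases p with
  | nil =>
    apply ncard_le_two_of_subset_pair (u := u) (v := u)
    rintro z ⟨-, hzs⟩
    simp only [Walk.support_nil, List.mem_singleton, Set.mem_setOf_eq] at hzs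
    simp [hzs]
  | cons h1 p1 =>
  rename_i v1
  cases p1 with
  | nil =>
    apply ncard_le_two_of_subset_pair (u := u) (v := v)
    rintro z ⟨-, hzs⟩
    simp only [Walk.support_cons, Walk.support_nil, List.mem_cons, List.mem_singleton,
      List.not_mem_nil, or_false, Set.mem_setOf_eq] at hzs
    rcases hzs with rfl|rfl <;> simp
  | cons h2 p2 =>
  cases p2 with
  | cons h3 p3 =>
    exfalso
    simp only [Walk.length_cons] at hlen
    omega
  | nil =>
    -- support is [u, v1, v]
    have hP := hp.1
    rw [Walk.cons_isPath_iff, Walk.cons_isPath_iff] at hP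
    obtain ⟨⟨-, h12⟩, h0⟩ := hP
    have d02 : u ≠ v := by intro h; apply h0; rw [h]; simp
    have n02 : ¬ (mas c N).Adj u v := by
      intro hadj
      have hd1 := SimpleGraph.dist_le (Walk.cons hadj Walk.nil)
      have hd2 := hp.2
      simp only [Walk.length_cons, Walk.length_nil] at hd1 hd2
      omega
    have D := gp2_arith (mas_adj.mp h1) (mas_adj.mp h2)
      (fun h => n02 (mas_adj.mpr h)) (Fin.val_ne_iff.mpr d02)
    rcases D with D|D|D
    · apply ncard_le_two_of_subset_pair (u := v1) (v := v)
      rintro z ⟨hzM, hzs⟩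
      simp only [Set.mem_setOf_eq] at hzM hzs
      simp only [Walk.support_cons, Walk.support_nil, List.mem_cons, List.mem_singleton,
        List.not_mem_nil, or_false] at hzs
      rcases hzs with rfl|rfl|rfl
      · exact absurd hzM D
      · simp
      · simp
    · apply ncard_le_two_of_subset_pair (u := u) (v := v)
      rintro z ⟨hzM, hzs⟩
      simp only [Set.mem_setOf_eq] at hzM hzs
      simp only [Walk.support_cons, Walk.support_nil, List.mem_cons, List.mem_singleton,
        List.not_mem_nil, or_false] at hzs
      rcases hzs with rfl|rfl|rfl
      · simp
      · exact absurd hzM D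
      · simp
    · apply ncard_le_two_of_subset_pair (u := u) (v := v1)
      rintro z ⟨hzM, hzs⟩
      simp only [Set.mem_setOf_eq] at hzM hzs
      simp only [Walk.support_cons, Walk.support_nil, List.mem_cons, List.mem_singleton,
        List.not_mem_nil, or_false] at hzs
      rcases hzs with rfl|rfl|rfl
      · simp
      · simp
      · exact absurd hzM D

/-! ### Helpers to derive contradictions from position sets -/

section Absurd

variable {V : Type*} [Finite V] {G : SimpleGraph V} {T : Set V}

lemma mp_absurd3 (hT : IsMpSet G T) {v0 v1 v2 : V} (h1 : G.Adj v0 v1) (h2 : G.Adj v1 v2)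
    (d02 : v0 ≠ v2) (n02 : ¬ G.Adj v0 v2)
    (m0 : v0 ∈ T) (m1 : v1 ∈ T) (m2 : v2 ∈ T) : False := by
  have h := hT _ (induced3 h1 h2 d02 n02)
  have h3 := three_le_ncard
      (s := T ∩ {x | x ∈ (Walk.cons h1 (Walk.cons h2 Walk.nil)).support})
      ⟨m0, by simp⟩ ⟨m1, by simp⟩ ⟨m2, by simp⟩ h1.ne d02 h2.ne
  omega

lemma gp_absurd3 (hT : IsGpSet G T) {v0 v1 v2 : V} (h1 : G.Adj v0 v1) (h2 : G.Adj v1 v2)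
    (d02 : v0 ≠ v2) (n02 : ¬ G.Adj v0 v2)
    (m0 : v0 ∈ T) (m1 : v1 ∈ T) (m2 : v2 ∈ T) : False := by
  have h := hT _ (geo2 h1 h2 d02 n02)
  have h3 := three_le_ncard
      (s := T ∩ {x | x ∈ (Walk.cons h1 (Walk.cons h2 Walk.nil)).support})
      ⟨m0, by simp⟩ ⟨m1, by simp⟩ ⟨m2, by simp⟩ h1.ne d02 h2.ne
  omega

lemma mp_absurd4a (hT : IsMpSet G T) {v0 v1 v2 v3 : V} (h1 : G.Adj v0 v1) (h2 : G.Adj v1 v2)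
    (h3 : G.Adj v2 v3) (d02 : v0 ≠ v2) (d03 : v0 ≠ v3) (d13 : v1 ≠ v3)
    (n02 : ¬ G.Adj v0 v2) (n03 : ¬ G.Adj v0 v3) (n13 : ¬ G.Adj v1 v3)
    (m0 : v0 ∈ T) (m1 : v1 ∈ T) (m3 : v3 ∈ T) : False := by
  have h := hT _ (induced4 h1 h2 h3 d02 d03 d13 n02 n03 n13)
  have h3' := three_le_ncard
      (s := T ∩ {x | x ∈ (Walk.cons h1 (Walk.cons h2 (Walk.cons h3 Walk.nil))).support})
      ⟨m0, by simp⟩ ⟨m1, by simp⟩ ⟨m3, by simp⟩ h1.ne d03 d13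
  omega

lemma mp_absurd4b (hT : IsMpSet G T) {v0 v1 v2 v3 : V} (h1 : G.Adj v0 v1) (h2 : G.Adj v1 v2)
    (h3 : G.Adj v2 v3) (d02 : v0 ≠ v2) (d03 : v0 ≠ v3) (d13 : v1 ≠ v3)
    (n02 : ¬ G.Adj v0 v2) (n03 : ¬ G.Adj v0 v3) (n13 : ¬ G.Adj v1 v3)
    (m0 : v0 ∈ T) (m2 : v2 ∈ T) (m3 : v3 ∈ T) : False := by
  have h := hT _ (induced4 h1 h2 h3 d02 d03 d13 n02 n03 n13)
  have h3' := three_le_ncard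
      (s := T ∩ {x | x ∈ (Walk.cons h1 (Walk.cons h2 (Walk.cons h3 Walk.nil))).support})
      ⟨m0, by simp⟩ ⟨m2, by simp⟩ ⟨m3, by simp⟩ d02 d03 h3.ne
  omega

end Absurd

/-! ### Upper bounds -/

set_option maxHeartbeats 2000000 in
lemma mp_upper {a b : ℕ} (hb : 3 ≤ b) (h23 : 2*b ≤ 3*a) (hab : a < b)
    {T : Set (Fin (b+2))} (hT : IsMpSet (mas (b-a) (b+2)) T) : T.ncard ≤ a := by
  have hc : 1 ≤ b - a := by omega
  obtain ⟨xx, hxx⟩ : ∃ i : Fin (b+2), i.val = 0 := ⟨⟨0, by omega⟩, rfl⟩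
  obtain ⟨yy, hyy⟩ : ∃ i : Fin (b+2), i.val = 1 := ⟨⟨1, by omega⟩, rfl⟩
  obtain ⟨ra, hra⟩ : ∃ i : Fin (b+2), i.val = 2 := ⟨⟨2, by omega⟩, rfl⟩
  obtain ⟨rb, hrb⟩ : ∃ i : Fin (b+2), i.val = 2+(b-a) := ⟨⟨2+(b-a), by omega⟩, rfl⟩
  have nadj : ∀ {i j : Fin (b+2)}, ¬ masRel (b-a) i.val j.val →
      ¬ (mas (b-a) (b+2)).Adj i j := fun h hadj => h (mas_adj.mp hadj)
  by_cases hx : xx ∈ T <;> by_cases hy : yy ∈ T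
  · -- both x and y in T : T ⊆ {x, y}
    have hsub : T ⊆ {xx, yy} := by
      intro t ht
      by_contra hnt
      simp only [Set.mem_insert_iff, Set.mem_singleton_iff] at hnt
      push_neg at hnt
      obtain ⟨ht0, ht1⟩ := hnt
      have hv0 : t.val ≠ 0 := fun h => ht0 (Fin.val_injective (h.trans hxx.symm))
      have hv1 : t.val ≠ 1 := fun h => ht1 (Fin.val_injective (h.trans hyy.symm))
      have htlt := t.isLt
      rcases (by omega : (2 ≤ t.val ∧ t.val < 2+(b-a)) ∨
          (2+(b-a) ≤ t.val ∧ t.val < 2+2*(b-a)) ∨ 2+2*(b-a) ≤ t.val) with hA|hB|hS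
      · exact mp_absurd4a hT (adj_of_val (by unfold masRel; omega))
          (adj_of_val (by unfold masRel; omega) : (mas (b-a) (b+2)).Adj t rb)
          (adj_of_val (by unfold masRel; omega))
          (ne_of_val_ne (by omega)) (ne_of_val_ne (by omega)) (ne_of_val_ne (by omega))
          (nadj (by unfold masRel; omega)) (nadj (by unfold masRel; omega))
          (nadj (by unfold masRel; omega)) hx ht hy
      · exact mp_absurd4b hT
          ((adj_of_val (by unfold masRel; omega)) : (mas (b-a) (b+2)).Adj xx ra)
          (adj_of_val (by unfold masRel; omega)) (adj_of_val (by unfold masRel; omega))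
          (ne_of_val_ne (by omega)) (ne_of_val_ne (by omega)) (ne_of_val_ne (by omega))
          (nadj (by unfold masRel; omega)) (nadj (by unfold masRel; omega))
          (nadj (by unfold masRel; omega)) hx ht hy
      · exact mp_absurd3 hT
          ((adj_of_val (by unfold masRel; omega)) : (mas (b-a) (b+2)).Adj xx t)
          (adj_of_val (by unfold masRel; omega))
          (ne_of_val_ne (by omega)) (nadj (by unfold masRel; omega)) hx ht hy
    exact le_trans (ncard_le_two_of_subset_pair hsub) (by omega)
  · -- x ∈ T, y ∉ T
    by_cases hS : ∃ s, s ∈ T ∧ 2+2*(b-a) ≤ s.val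
    · obtain ⟨s, hsT, hsS⟩ := hS
      have hslt := s.isLt
      have hsub : T ⊆ {xx, s} := by
        intro t ht
        by_contra hnt
        simp only [Set.mem_insert_iff, Set.mem_singleton_iff] at hnt
        push_neg at hnt
        obtain ⟨ht0, hts⟩ := hnt
        have hty : t ≠ yy := fun h => hy (h ▸ ht)
        have hv0 : t.val ≠ 0 := fun h => ht0 (Fin.val_injective (h.trans hxx.symm))
        have hv1 : t.val ≠ 1 := fun h => hty (Fin.val_injective (h.trans hyy.symm))
        have htlt := t.isLt
        rcases (by omega : (2 ≤ t.val ∧ t.val < 2+(b-a)) ∨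
            (2+(b-a) ≤ t.val ∧ t.val < 2+2*(b-a)) ∨ 2+2*(b-a) ≤ t.val) with hA|hB|hS'
        · exact mp_absurd3 hT
            ((adj_of_val (by unfold masRel; omega)) : (mas (b-a) (b+2)).Adj s xx)
            (adj_of_val (by unfold masRel; omega))
            (Ne.symm hts) (nadj (by unfold masRel; omega)) hsT hx ht
        · exact mp_absurd4a hT
            ((adj_of_val (by unfold masRel; omega)) : (mas (b-a) (b+2)).Adj xx s)
            ((adj_of_val (by unfold masRel; omega)) : (mas (b-a) (b+2)).Adj s yy)
            (adj_of_val (by unfold masRel; omega))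
            (ne_of_val_ne (by omega)) (ne_of_val_ne (by omega)) (ne_of_val_ne (by omega))
            (nadj (by unfold masRel; omega)) (nadj (by unfold masRel; omega))
            (nadj (by unfold masRel; omega)) hx hsT ht
        · exact mp_absurd3 hT
            ((adj_of_val (by unfold masRel; omega)) : (mas (b-a) (b+2)).Adj s xx)
            (adj_of_val (by unfold masRel; omega))
            (Ne.symm hts) (nadj (by unfold masRel; omega)) hsT hx ht
      exact le_trans (ncard_le_two_of_subset_pair hsub) (by omega)
    · push_neg at hS
      by_cases hB : ∃ t, t ∈ T ∧ 2+(b-a) ≤ t.val ∧ t.val < 2+2*(b-a)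
      · obtain ⟨rb', hrbT, hrbB⟩ := hB
        have hsub : T ⊆ ({xx} : Set (Fin (b+2))) ∪
            {i : Fin (b+2) | 2+(b-a) ≤ i.val ∧ i.val < 2+2*(b-a)} := by
          intro t ht
          have hty : t ≠ yy := fun h => hy (h ▸ ht)
          have hv1 : t.val ≠ 1 := fun h => hty (Fin.val_injective (h.trans hyy.symm))
          have hvS := hS t ht
          have htlt := t.isLt
          rw [Set.mem_union, Set.mem_singleton_iff, Set.mem_setOf_eq]
          by_cases h0 : t.val = 0
          · exact Or.inl (Fin.val_injective (h0.trans hxx.symm))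
          rcases (by omega : (2 ≤ t.val ∧ t.val < 2+(b-a)) ∨
              (2+(b-a) ≤ t.val ∧ t.val < 2+2*(b-a))) with hA'|hB'
          · exfalso
            exact mp_absurd3 hT
              ((adj_of_val (by unfold masRel; omega)) : (mas (b-a) (b+2)).Adj xx t)
              ((adj_of_val (by unfold masRel; omega)) : (mas (b-a) (b+2)).Adj t rb')
              (ne_of_val_ne (by omega)) (nadj (by unfold masRel; omega)) hx ht hrbT
          · exact Or.inr hB'
        calc T.ncard ≤ (({xx} : Set (Fin (b+2))) ∪
            {i : Fin (b+2) | 2+(b-a) ≤ i.val ∧ i.val < 2+2*(b-a)}).ncard :=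
              Set.ncard_le_ncard hsub (Set.toFinite _)
          _ ≤ ({xx} : Set (Fin (b+2))).ncard +
              {i : Fin (b+2) | 2+(b-a) ≤ i.val ∧ i.val < 2+2*(b-a)}.ncard :=
              Set.ncard_union_le _ _
          _ ≤ a := by
              rw [Set.ncard_singleton, ncard_val_Ico (by omega)]; omega
      · push_neg at hB
        have hsub : T ⊆ ({xx} : Set (Fin (b+2))) ∪
            {i : Fin (b+2) | 2 ≤ i.val ∧ i.val < 2+(b-a)} := by
          intro t ht
          have hty : t ≠ yy := fun h => hy (h ▸ ht)
          have hv1 : t.val ≠ 1 := fun h => hty (Fin.val_injective (h.trans hyy.symm))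
          have hvS := hS t ht
          have hvB := hB t ht
          have htlt := t.isLt
          rw [Set.mem_union, Set.mem_singleton_iff, Set.mem_setOf_eq]
          by_cases h0 : t.val = 0
          · exact Or.inl (Fin.val_injective (h0.trans hxx.symm))
          · exact Or.inr (by omega)
        calc T.ncard ≤ (({xx} : Set (Fin (b+2))) ∪
            {i : Fin (b+2) | 2 ≤ i.val ∧ i.val < 2+(b-a)}).ncard :=
              Set.ncard_le_ncard hsub (Set.toFinite _)
          _ ≤ ({xx} : Set (Fin (b+2))).ncard +
              {i : Fin (b+2) | 2 ≤ i.val ∧ i.val < 2+(b-a)}.ncard :=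
              Set.ncard_union_le _ _
          _ ≤ a := by
              rw [Set.ncard_singleton, ncard_val_Ico (by omega)]; omega
  · -- y ∈ T, x ∉ T
    by_cases hS : ∃ s, s ∈ T ∧ 2+2*(b-a) ≤ s.val
    · obtain ⟨s, hsT, hsS⟩ := hS
      have hslt := s.isLt
      have hsub : T ⊆ {yy, s} := by
        intro t ht
        by_contra hnt
        simp only [Set.mem_insert_iff, Set.mem_singleton_iff] at hnt
        push_neg at hnt
        obtain ⟨ht1, hts⟩ := hnt
        have htx : t ≠ xx := fun h => hx (h ▸ ht)
        have hv0 : t.val ≠ 0 := fun h => htx (Fin.val_injective (h.trans hxx.symm))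
        have hv1 : t.val ≠ 1 := fun h => ht1 (Fin.val_injective (h.trans hyy.symm))
        have htlt := t.isLt
        rcases (by omega : (2 ≤ t.val ∧ t.val < 2+(b-a)) ∨
            (2+(b-a) ≤ t.val ∧ t.val < 2+2*(b-a)) ∨ 2+2*(b-a) ≤ t.val) with hA|hB|hS'
        · exact mp_absurd4a hT
            ((adj_of_val (by unfold masRel; omega)) : (mas (b-a) (b+2)).Adj yy s)
            ((adj_of_val (by unfold masRel; omega)) : (mas (b-a) (b+2)).Adj s xx)
            (adj_of_val (by unfold masRel; omega))
            (ne_of_val_ne (by omega)) (ne_of_val_ne (by omega)) (Ne.symm hts)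
            (nadj (by unfold masRel; omega)) (nadj (by unfold masRel; omega))
            (nadj (by unfold masRel; omega)) hy hsT ht
        · exact mp_absurd3 hT
            ((adj_of_val (by unfold masRel; omega)) : (mas (b-a) (b+2)).Adj s yy)
            (adj_of_val (by unfold masRel; omega))
            (Ne.symm hts) (nadj (by unfold masRel; omega)) hsT hy ht
        · exact mp_absurd3 hT
            ((adj_of_val (by unfold masRel; omega)) : (mas (b-a) (b+2)).Adj s yy)
            (adj_of_val (by unfold masRel; omega))
            (Ne.symm hts) (nadj (by unfold masRel; omega)) hsT hy ht
      exact le_trans (ncard_le_two_of_subset_pair hsub) (by omega)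
    · push_neg at hS
      by_cases hA : ∃ t, t ∈ T ∧ 2 ≤ t.val ∧ t.val < 2+(b-a)
      · obtain ⟨ra', hraT, hraA⟩ := hA
        have hsub : T ⊆ ({yy} : Set (Fin (b+2))) ∪
            {i : Fin (b+2) | 2 ≤ i.val ∧ i.val < 2+(b-a)} := by
          intro t ht
          have htx : t ≠ xx := fun h => hx (h ▸ ht)
          have hv0 : t.val ≠ 0 := fun h => htx (Fin.val_injective (h.trans hxx.symm))
          have hvS := hS t ht
          have htlt := t.isLt
          rw [Set.mem_union, Set.mem_singleton_iff, Set.mem_setOf_eq]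
          by_cases h1 : t.val = 1
          · exact Or.inl (Fin.val_injective (h1.trans hyy.symm))
          rcases (by omega : (2 ≤ t.val ∧ t.val < 2+(b-a)) ∨
              (2+(b-a) ≤ t.val ∧ t.val < 2+2*(b-a))) with hA'|hB'
          · exact Or.inr hA'
          · exfalso
            exact mp_absurd3 hT
              ((adj_of_val (by unfold masRel; omega)) : (mas (b-a) (b+2)).Adj yy t)
              ((adj_of_val (by unfold masRel; omega)) : (mas (b-a) (b+2)).Adj t ra')
              (ne_of_val_ne (by omega)) (nadj (by unfold masRel; omega)) hy ht hraT
        calc T.ncard ≤ (({yy} : Set (Fin (b+2))) ∪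
            {i : Fin (b+2) | 2 ≤ i.val ∧ i.val < 2+(b-a)}).ncard :=
              Set.ncard_le_ncard hsub (Set.toFinite _)
          _ ≤ ({yy} : Set (Fin (b+2))).ncard +
              {i : Fin (b+2) | 2 ≤ i.val ∧ i.val < 2+(b-a)}.ncard :=
              Set.ncard_union_le _ _
          _ ≤ a := by
              rw [Set.ncard_singleton, ncard_val_Ico (by omega)]; omega
      · push_neg at hA
        have hsub : T ⊆ ({yy} : Set (Fin (b+2))) ∪
            {i : Fin (b+2) | 2+(b-a) ≤ i.val ∧ i.val < 2+2*(b-a)} := by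
          intro t ht
          have htx : t ≠ xx := fun h => hx (h ▸ ht)
          have hv0 : t.val ≠ 0 := fun h => htx (Fin.val_injective (h.trans hxx.symm))
          have hvS := hS t ht
          have hvA := hA t ht
          have htlt := t.isLt
          rw [Set.mem_union, Set.mem_singleton_iff, Set.mem_setOf_eq]
          by_cases h1 : t.val = 1
          · exact Or.inl (Fin.val_injective (h1.trans hyy.symm))
          · exact Or.inr (by omega)
        calc T.ncard ≤ (({yy} : Set (Fin (b+2))) ∪
            {i : Fin (b+2) | 2+(b-a) ≤ i.val ∧ i.val < 2+2*(b-a)}).ncard :=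
              Set.ncard_le_ncard hsub (Set.toFinite _)
          _ ≤ ({yy} : Set (Fin (b+2))).ncard +
              {i : Fin (b+2) | 2+(b-a) ≤ i.val ∧ i.val < 2+2*(b-a)}.ncard :=
              Set.ncard_union_le _ _
          _ ≤ a := by
              rw [Set.ncard_singleton, ncard_val_Ico (by omega)]; omega
  · -- x ∉ T, y ∉ T
    by_cases hS : ∃ s, s ∈ T ∧ 2+2*(b-a) ≤ s.val
    · obtain ⟨s, hsT, hsS⟩ := hS
      have hslt := s.isLt
      by_cases hA : ∃ t, t ∈ T ∧ 2 ≤ t.val ∧ t.val < 2+(b-a)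
      · obtain ⟨ra', hraT, hraA⟩ := hA
        have hsub : T ⊆ {i : Fin (b+2) | 2 ≤ i.val ∧ i.val < 2+(b-a)} ∪
            {i : Fin (b+2) | 2+2*(b-a) ≤ i.val} := by
          intro t ht
          have htx : t ≠ xx := fun h => hx (h ▸ ht)
          have hty : t ≠ yy := fun h => hy (h ▸ ht)
          have hv0 : t.val ≠ 0 := fun h => htx (Fin.val_injective (h.trans hxx.symm))
          have hv1 : t.val ≠ 1 := fun h => hty (Fin.val_injective (h.trans hyy.symm))
          have htlt := t.isLt
          rw [Set.mem_union, Set.mem_setOf_eq, Set.mem_setOf_eq]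
          rcases (by omega : (2 ≤ t.val ∧ t.val < 2+(b-a)) ∨
              (2+(b-a) ≤ t.val ∧ t.val < 2+2*(b-a)) ∨ 2+2*(b-a) ≤ t.val) with hA'|hB'|hS'
          · exact Or.inl hA'
          · exfalso
            exact mp_absurd4b hT
              ((adj_of_val (by unfold masRel; omega)) : (mas (b-a) (b+2)).Adj s xx)
              ((adj_of_val (by unfold masRel; omega)) : (mas (b-a) (b+2)).Adj xx ra')
              ((adj_of_val (by unfold masRel; omega)) : (mas (b-a) (b+2)).Adj ra' t)
              (ne_of_val_ne (by omega)) (ne_of_val_ne (by omega)) (ne_of_val_ne (by omega))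
              (nadj (by unfold masRel; omega)) (nadj (by unfold masRel; omega))
              (nadj (by unfold masRel; omega)) hsT hraT ht
          · exact Or.inr hS'
        calc T.ncard ≤ ({i : Fin (b+2) | 2 ≤ i.val ∧ i.val < 2+(b-a)} ∪
            {i : Fin (b+2) | 2+2*(b-a) ≤ i.val}).ncard :=
              Set.ncard_le_ncard hsub (Set.toFinite _)
          _ ≤ {i : Fin (b+2) | 2 ≤ i.val ∧ i.val < 2+(b-a)}.ncard +
              {i : Fin (b+2) | 2+2*(b-a) ≤ i.val}.ncard := Set.ncard_union_le _ _
          _ ≤ a := by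
              rw [ncard_val_Ico (by omega), ncard_val_le (by omega)]; omega
      · push_neg at hA
        have hsub : T ⊆ {i : Fin (b+2) | 2+(b-a) ≤ i.val} := by
          intro t ht
          have htx : t ≠ xx := fun h => hx (h ▸ ht)
          have hty : t ≠ yy := fun h => hy (h ▸ ht)
          have hv0 : t.val ≠ 0 := fun h => htx (Fin.val_injective (h.trans hxx.symm))
          have hv1 : t.val ≠ 1 := fun h => hty (Fin.val_injective (h.trans hyy.symm))
          have hvA := hA t ht
          rw [Set.mem_setOf_eq]
          omega
        calc T.ncard ≤ {i : Fin (b+2) | 2+(b-a) ≤ i.val}.ncard :=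
              Set.ncard_le_ncard hsub (Set.toFinite _)
          _ ≤ a := by rw [ncard_val_le (by omega)]; omega
    · push_neg at hS
      have hsub : T ⊆ {i : Fin (b+2) | 2 ≤ i.val ∧ i.val < 2+2*(b-a)} := by
        intro t ht
        have htx : t ≠ xx := fun h => hx (h ▸ ht)
        have hty : t ≠ yy := fun h => hy (h ▸ ht)
        have hv0 : t.val ≠ 0 := fun h => htx (Fin.val_injective (h.trans hxx.symm))
        have hv1 : t.val ≠ 1 := fun h => hty (Fin.val_injective (h.trans hyy.symm))
        have hvS := hS t ht
        rw [Set.mem_setOf_eq]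
        omega
      calc T.ncard ≤ {i : Fin (b+2) | 2 ≤ i.val ∧ i.val < 2+2*(b-a)}.ncard :=
            Set.ncard_le_ncard hsub (Set.toFinite _)
        _ ≤ a := by rw [ncard_val_Ico (by omega)]; omega

set_option maxHeartbeats 2000000 in
lemma gp_upper {a b : ℕ} (hb : 3 ≤ b) (h23 : 2*b ≤ 3*a) (hab : a < b)
    {T : Set (Fin (b+2))} (hT : IsGpSet (mas (b-a) (b+2)) T) : T.ncard ≤ b := by
  have hc : 1 ≤ b - a := by omega
  obtain ⟨xx, hxx⟩ : ∃ i : Fin (b+2), i.val = 0 := ⟨⟨0, by omega⟩, rfl⟩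
  obtain ⟨yy, hyy⟩ : ∃ i : Fin (b+2), i.val = 1 := ⟨⟨1, by omega⟩, rfl⟩
  have nadj : ∀ {i j : Fin (b+2)}, ¬ masRel (b-a) i.val j.val →
      ¬ (mas (b-a) (b+2)).Adj i j := fun h hadj => h (mas_adj.mp hadj)
  by_cases hx : xx ∈ T
  · by_cases hS : ∃ s, s ∈ T ∧ 2+2*(b-a) ≤ s.val
    · obtain ⟨s, hsT, hsS⟩ := hS
      have hslt := s.isLt
      by_cases hA : ∃ t, t ∈ T ∧ 2 ≤ t.val ∧ t.val < 2+(b-a)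
      · obtain ⟨ra', hraT, hraA⟩ := hA
        exfalso
        exact gp_absurd3 hT
          ((adj_of_val (by unfold masRel; omega)) : (mas (b-a) (b+2)).Adj s xx)
          ((adj_of_val (by unfold masRel; omega)) : (mas (b-a) (b+2)).Adj xx ra')
          (ne_of_val_ne (by omega)) (nadj (by unfold masRel; omega)) hsT hx hraT
      · push_neg at hA
        by_cases hy : yy ∈ T
        · exfalso
          exact gp_absurd3 hT
            ((adj_of_val (by unfold masRel; omega)) : (mas (b-a) (b+2)).Adj xx s)
            ((adj_of_val (by unfold masRel; omega)) : (mas (b-a) (b+2)).Adj s yy)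
            (ne_of_val_ne (by omega)) (nadj (by unfold masRel; omega)) hx hsT hy
        · have hsub : T ⊆ ({xx} : Set (Fin (b+2))) ∪
              {i : Fin (b+2) | 2+(b-a) ≤ i.val} := by
            intro t ht
            have hty : t ≠ yy := fun h => hy (h ▸ ht)
            have hv1 : t.val ≠ 1 := fun h => hty (Fin.val_injective (h.trans hyy.symm))
            have hvA := hA t ht
            have htlt := t.isLt
            rw [Set.mem_union, Set.mem_singleton_iff, Set.mem_setOf_eq]
            by_cases h0 : t.val = 0
            · exact Or.inl (Fin.val_injective (h0.trans hxx.symm))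
            · exact Or.inr (by omega)
          calc T.ncard ≤ (({xx} : Set (Fin (b+2))) ∪
              {i : Fin (b+2) | 2+(b-a) ≤ i.val}).ncard :=
                Set.ncard_le_ncard hsub (Set.toFinite _)
            _ ≤ ({xx} : Set (Fin (b+2))).ncard +
                {i : Fin (b+2) | 2+(b-a) ≤ i.val}.ncard := Set.ncard_union_le _ _
            _ ≤ b := by rw [Set.ncard_singleton, ncard_val_le (by omega)]; omega
    · push_neg at hS
      by_cases hA : ∃ t, t ∈ T ∧ 2 ≤ t.val ∧ t.val < 2+(b-a)
      · obtain ⟨ra', hraT, hraA⟩ := hA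
        by_cases hB : ∃ t, t ∈ T ∧ 2+(b-a) ≤ t.val ∧ t.val < 2+2*(b-a)
        · obtain ⟨rb', hrbT, hrbB⟩ := hB
          exfalso
          exact gp_absurd3 hT
            ((adj_of_val (by unfold masRel; omega)) : (mas (b-a) (b+2)).Adj xx ra')
            ((adj_of_val (by unfold masRel; omega)) : (mas (b-a) (b+2)).Adj ra' rb')
            (ne_of_val_ne (by omega)) (nadj (by unfold masRel; omega)) hx hraT hrbT
        · push_neg at hB
          have hsub : T ⊆ ({xx, yy} : Set (Fin (b+2))) ∪
              {i : Fin (b+2) | 2 ≤ i.val ∧ i.val < 2+(b-a)} := by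
            intro t ht
            have hvS := hS t ht
            have hvB := hB t ht
            have htlt := t.isLt
            rw [Set.mem_union, Set.mem_insert_iff, Set.mem_singleton_iff, Set.mem_setOf_eq]
            by_cases h0 : t.val = 0
            · exact Or.inl (Or.inl (Fin.val_injective (h0.trans hxx.symm)))
            by_cases h1 : t.val = 1
            · exact Or.inl (Or.inr (Fin.val_injective (h1.trans hyy.symm)))
            · exact Or.inr (by omega)
          calc T.ncard ≤ (({xx, yy} : Set (Fin (b+2))) ∪
              {i : Fin (b+2) | 2 ≤ i.val ∧ i.val < 2+(b-a)}).ncard :=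
                Set.ncard_le_ncard hsub (Set.toFinite _)
            _ ≤ ({xx, yy} : Set (Fin (b+2))).ncard +
                {i : Fin (b+2) | 2 ≤ i.val ∧ i.val < 2+(b-a)}.ncard :=
                Set.ncard_union_le _ _
            _ ≤ b := by
                have h2 : ({xx, yy} : Set (Fin (b+2))).ncard ≤ 2 :=
                  ncard_le_two_of_subset_pair Set.Subset.rfl
                rw [ncard_val_Ico (by omega)]
                omega
      · push_neg at hA
        have hsub : T ⊆ ({xx, yy} : Set (Fin (b+2))) ∪
            {i : Fin (b+2) | 2+(b-a) ≤ i.val ∧ i.val < 2+2*(b-a)} := by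
          intro t ht
          have hvS := hS t ht
          have hvA := hA t ht
          have htlt := t.isLt
          rw [Set.mem_union, Set.mem_insert_iff, Set.mem_singleton_iff, Set.mem_setOf_eq]
          by_cases h0 : t.val = 0
          · exact Or.inl (Or.inl (Fin.val_injective (h0.trans hxx.symm)))
          by_cases h1 : t.val = 1
          · exact Or.inl (Or.inr (Fin.val_injective (h1.trans hyy.symm)))
          · exact Or.inr (by omega)
        calc T.ncard ≤ (({xx, yy} : Set (Fin (b+2))) ∪
            {i : Fin (b+2) | 2+(b-a) ≤ i.val ∧ i.val < 2+2*(b-a)}).ncard :=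
              Set.ncard_le_ncard hsub (Set.toFinite _)
          _ ≤ ({xx, yy} : Set (Fin (b+2))).ncard +
              {i : Fin (b+2) | 2+(b-a) ≤ i.val ∧ i.val < 2+2*(b-a)}.ncard :=
              Set.ncard_union_le _ _
          _ ≤ b := by
              have h2 : ({xx, yy} : Set (Fin (b+2))).ncard ≤ 2 :=
                ncard_le_two_of_subset_pair Set.Subset.rfl
              rw [ncard_val_Ico (by omega)]
              omega
  · by_cases hy : yy ∈ T
    · by_cases hS : ∃ s, s ∈ T ∧ 2+2*(b-a) ≤ s.val
      · obtain ⟨s, hsT, hsS⟩ := hS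
        have hslt := s.isLt
        by_cases hB : ∃ t, t ∈ T ∧ 2+(b-a) ≤ t.val ∧ t.val < 2+2*(b-a)
        · obtain ⟨rb', hrbT, hrbB⟩ := hB
          exfalso
          exact gp_absurd3 hT
            ((adj_of_val (by unfold masRel; omega)) : (mas (b-a) (b+2)).Adj s yy)
            ((adj_of_val (by unfold masRel; omega)) : (mas (b-a) (b+2)).Adj yy rb')
            (ne_of_val_ne (by omega)) (nadj (by unfold masRel; omega)) hsT hy hrbT
        · push_neg at hB
          have hsub : T ⊆ ({yy} : Set (Fin (b+2))) ∪
              ({i : Fin (b+2) | 2 ≤ i.val ∧ i.val < 2+(b-a)} ∪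
               {i : Fin (b+2) | 2+2*(b-a) ≤ i.val}) := by
            intro t ht
            have htx : t ≠ xx := fun h => hx (h ▸ ht)
            have hv0 : t.val ≠ 0 := fun h => htx (Fin.val_injective (h.trans hxx.symm))
            have hvB := hB t ht
            have htlt := t.isLt
            rw [Set.mem_union, Set.mem_union, Set.mem_singleton_iff, Set.mem_setOf_eq,
              Set.mem_setOf_eq]
            by_cases h1 : t.val = 1
            · exact Or.inl (Fin.val_injective (h1.trans hyy.symm))
            rcases (by omega : (2 ≤ t.val ∧ t.val < 2+(b-a)) ∨ 2+2*(b-a) ≤ t.val) with h|h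
            · exact Or.inr (Or.inl h)
            · exact Or.inr (Or.inr h)
          calc T.ncard ≤ (({yy} : Set (Fin (b+2))) ∪
              ({i : Fin (b+2) | 2 ≤ i.val ∧ i.val < 2+(b-a)} ∪
               {i : Fin (b+2) | 2+2*(b-a) ≤ i.val})).ncard :=
                Set.ncard_le_ncard hsub (Set.toFinite _)
            _ ≤ ({yy} : Set (Fin (b+2))).ncard +
                ({i : Fin (b+2) | 2 ≤ i.val ∧ i.val < 2+(b-a)} ∪
                 {i : Fin (b+2) | 2+2*(b-a) ≤ i.val}).ncard := Set.ncard_union_le _ _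
            _ ≤ ({yy} : Set (Fin (b+2))).ncard +
                ({i : Fin (b+2) | 2 ≤ i.val ∧ i.val < 2+(b-a)}.ncard +
                 {i : Fin (b+2) | 2+2*(b-a) ≤ i.val}.ncard) := by
                  have := Set.ncard_union_le {i : Fin (b+2) | 2 ≤ i.val ∧ i.val < 2+(b-a)}
                    {i : Fin (b+2) | 2+2*(b-a) ≤ i.val}
                  omega
            _ ≤ b := by
                rw [Set.ncard_singleton, ncard_val_Ico (by omega), ncard_val_le (by omega)]
                omega
      · push_neg at hS
        by_cases hA : ∃ t, t ∈ T ∧ 2 ≤ t.val ∧ t.val < 2+(b-a)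
        · obtain ⟨ra', hraT, hraA⟩ := hA
          by_cases hB : ∃ t, t ∈ T ∧ 2+(b-a) ≤ t.val ∧ t.val < 2+2*(b-a)
          · obtain ⟨rb', hrbT, hrbB⟩ := hB
            exfalso
            exact gp_absurd3 hT
              ((adj_of_val (by unfold masRel; omega)) : (mas (b-a) (b+2)).Adj yy rb')
              ((adj_of_val (by unfold masRel; omega)) : (mas (b-a) (b+2)).Adj rb' ra')
              (ne_of_val_ne (by omega)) (nadj (by unfold masRel; omega)) hy hrbT hraT
          · push_neg at hB
            have hsub : T ⊆ ({yy} : Set (Fin (b+2))) ∪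
                {i : Fin (b+2) | 2 ≤ i.val ∧ i.val < 2+(b-a)} := by
              intro t ht
              have htx : t ≠ xx := fun h => hx (h ▸ ht)
              have hv0 : t.val ≠ 0 := fun h => htx (Fin.val_injective (h.trans hxx.symm))
              have hvS := hS t ht
              have hvB := hB t ht
              have htlt := t.isLt
              rw [Set.mem_union, Set.mem_singleton_iff, Set.mem_setOf_eq]
              by_cases h1 : t.val = 1
              · exact Or.inl (Fin.val_injective (h1.trans hyy.symm))
              · exact Or.inr (by omega)
            calc T.ncard ≤ (({yy} : Set (Fin (b+2))) ∪
                {i : Fin (b+2) | 2 ≤ i.val ∧ i.val < 2+(b-a)}).ncard :=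
                  Set.ncard_le_ncard hsub (Set.toFinite _)
              _ ≤ ({yy} : Set (Fin (b+2))).ncard +
                  {i : Fin (b+2) | 2 ≤ i.val ∧ i.val < 2+(b-a)}.ncard :=
                  Set.ncard_union_le _ _
              _ ≤ b := by rw [Set.ncard_singleton, ncard_val_Ico (by omega)]; omega
        · push_neg at hA
          have hsub : T ⊆ ({yy} : Set (Fin (b+2))) ∪
              {i : Fin (b+2) | 2+(b-a) ≤ i.val ∧ i.val < 2+2*(b-a)} := by
            intro t ht
            have htx : t ≠ xx := fun h => hx (h ▸ ht)
            have hv0 : t.val ≠ 0 := fun h => htx (Fin.val_injective (h.trans hxx.symm))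
            have hvS := hS t ht
            have hvA := hA t ht
            have htlt := t.isLt
            rw [Set.mem_union, Set.mem_singleton_iff, Set.mem_setOf_eq]
            by_cases h1 : t.val = 1
            · exact Or.inl (Fin.val_injective (h1.trans hyy.symm))
            · exact Or.inr (by omega)
          calc T.ncard ≤ (({yy} : Set (Fin (b+2))) ∪
              {i : Fin (b+2) | 2+(b-a) ≤ i.val ∧ i.val < 2+2*(b-a)}).ncard :=
                Set.ncard_le_ncard hsub (Set.toFinite _)
            _ ≤ ({yy} : Set (Fin (b+2))).ncard +
                {i : Fin (b+2) | 2+(b-a) ≤ i.val ∧ i.val < 2+2*(b-a)}.ncard :=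
                Set.ncard_union_le _ _
            _ ≤ b := by rw [Set.ncard_singleton, ncard_val_Ico (by omega)]; omega
    · have hsub : T ⊆ {i : Fin (b+2) | 2 ≤ i.val} := by
        intro t ht
        have htx : t ≠ xx := fun h => hx (h ▸ ht)
        have hty : t ≠ yy := fun h => hy (h ▸ ht)
        have hv0 : t.val ≠ 0 := fun h => htx (Fin.val_injective (h.trans hxx.symm))
        have hv1 : t.val ≠ 1 := fun h => hty (Fin.val_injective (h.trans hyy.symm))
        rw [Set.mem_setOf_eq]
        omega
      calc T.ncard ≤ {i : Fin (b+2) | 2 ≤ i.val}.ncard :=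
            Set.ncard_le_ncard hsub (Set.toFinite _)
        _ ≤ b := by rw [ncard_val_le (by omega)]; omega

theorem exists_graph_order_b_add_two (a b : ℕ) (hb : 3 ≤ b) (h23 : 2 * b ≤ 3 * a)
    (hab : a < b) :
    ∃ G : SimpleGraph (Fin (b + 2)), mpNum G = a ∧ gpNum G = b := by
  refine ⟨mas (b-a) (b+2), ?_, ?_⟩
  · have hmem : a ∈ {n | ∃ S : Set (Fin (b+2)), IsMpSet (mas (b-a) (b+2)) S ∧ S.ncard = n} :=
      ⟨{i : Fin (b+2) | 2+(b-a) ≤ i.val}, mas_isMpSet,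
        by rw [ncard_val_le (by omega)]; omega⟩
    have hub : ∀ n ∈ {n | ∃ S : Set (Fin (b+2)), IsMpSet (mas (b-a) (b+2)) S ∧ S.ncard = n},
        n ≤ a := by
      rintro n ⟨T, hT, rfl⟩
      exact mp_upper hb h23 hab hT
    exact le_antisymm (csSup_le ⟨a, hmem⟩ hub) (le_csSup ⟨a, hub⟩ hmem)
  · have hmem : b ∈ {n | ∃ S : Set (Fin (b+2)), IsGpSet (mas (b-a) (b+2)) S ∧ S.ncard = n} :=
      ⟨{i : Fin (b+2) | 2 ≤ i.val},
        mas_isGpSet (by omega) (by omega),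
        by rw [ncard_val_le (by omega)]; omega⟩
    have hub : ∀ n ∈ {n | ∃ S : Set (Fin (b+2)), IsGpSet (mas (b-a) (b+2)) S ∧ S.ncard = n},
        n ≤ b := by
      rintro n ⟨T, hT, rfl⟩
      exact gp_upper hb h23 hab hT
    exact le_antisymm (csSup_le ⟨b, hmem⟩ hub) (le_csSup ⟨b, hub⟩ hmem)
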